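/- Let V be a finite set and let E ⊆ V × V be the edge relation of a directed acyclic graph without multiple edges (i.e. the transitive closure of E is irreflexive). Let H ⊆ E consist of those edges (i,j) ∈ E such that there is no directed path from i to j using only edges of E other than (i,j) itself (equivalently, (i,j) is not in the transitive closure of E \ {(i,j)}). Then for all x, y ∈ V, there is a directed path from x to y using edges of E if and only if there is a directed path from x to y using edges of H; that is, the transitive closures of E and H coincide. -/

import Mathlib

open Relation

/-- Let `E` be the edge relation of a directed acyclic graph on a finite vertex set `V`
(acyclic: the transitive closure of `E` is irreflexive).  Let `H` consist of those edges
`(i,j) ∈ E` for which there is no directed path from `i` to `j` avoiding the edge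
`(i,j)`.  Then the transitive closures of `E` and `H` coincide: there is a directed path
from `x` to `y` in `E` iff there is one in `H`. -/
theorem stmt15 {V : Type*} [Finite V] (E : V → V → Prop)
    (hacyc : ∀ v : V, ¬ Relation.TransGen E v v) (x y : V) :
    Relation.TransGen E x y ↔
      Relation.TransGen
        (fun a b => E a b ∧
          ¬ Relation.TransGen (fun c d => E c d ∧ ¬(c = a ∧ d = b)) a b) x y := by
  classical
  set H : V → V → Prop := fun a b => E a b ∧
      ¬ Relation.TransGen (fun c d => E c d ∧ ¬(c = a ∧ d = b)) a b with hHdef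
  set f : V → ℕ := fun a => {z | ReflTransGen E z a}.ncard with hf
  set g : V → ℕ := fun a => {z | ReflTransGen E a z}.ncard with hg
  have hfmono : ∀ {a u}, ReflTransGen E a u → f a ≤ f u := by
    intro a u h
    exact Set.ncard_le_ncard (fun z hz => hz.trans h) (Set.toFinite _)
  have hgmono : ∀ {a u}, ReflTransGen E a u → g u ≤ g a := by
    intro a u h
    exact Set.ncard_le_ncard (fun z hz => h.trans hz) (Set.toFinite _)
  have hfstrict : ∀ {a u}, TransGen E a u → f a < f u := by
    intro a u h
    apply Set.ncard_lt_ncard _ (Set.toFinite _)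
    refine ⟨fun z hz => hz.trans h.to_reflTransGen, fun hsub => ?_⟩
    have hu : ReflTransGen E u a := hsub ReflTransGen.refl
    exact hacyc u (Relation.TransGen.trans_right hu h)
  have hgstrict : ∀ {a u}, TransGen E a u → g u < g a := by
    intro a u h
    apply Set.ncard_lt_ncard _ (Set.toFinite _)
    refine ⟨fun z hz => h.to_reflTransGen.trans hz, fun hsub => ?_⟩
    have hu : ReflTransGen E u a := hsub ReflTransGen.refl
    exact hacyc u (Relation.TransGen.trans_right hu h)
  have hfbound : ∀ a, f a ≤ Nat.card V := by
    intro a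
    have := Set.ncard_le_ncard (Set.subset_univ {z | ReflTransGen E z a}) Set.finite_univ
    simpa [Set.ncard_univ] using this
  have hgbound : ∀ a, g a ≤ Nat.card V := by
    intro a
    have := Set.ncard_le_ncard (Set.subset_univ {z | ReflTransGen E a z}) Set.finite_univ
    simpa [Set.ncard_univ] using this
  have key : ∀ n a b, 2 * Nat.card V ≤ f a + g b + n → E a b → TransGen H a b := by
    intro n
    induction n with
    | zero =>
      intro a b hn hab
      have h1 : f a ≤ Nat.card V := hfbound a
      have h2 : g b < g a := hgstrict (TransGen.single hab)
      have h3 : g a ≤ Nat.card V := hgbound a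
      omega
    | succ n ih =>
      intro a b hn hab
      by_cases hP : TransGen (fun c d => E c d ∧ ¬(c = a ∧ d = b)) a b
      · have lift : ∀ u, TransGen (fun c d => E c d ∧ ¬(c = a ∧ d = b)) u b →
            ReflTransGen E a u → TransGen H u b := by
          intro u hub
          induction hub using Relation.TransGen.head_induction_on with
          | single h =>
            intro hau
            rename_i u'
            have hne : u' ≠ a := fun he => h.2 ⟨he, rfl⟩
            have htg : TransGen E a u' := by
              rcases reflTransGen_iff_eq_or_transGen.mp hau with he | htg
              · exact absurd he hne
              · exact htg
            have h1 : f a < f u' := hfstrict htg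
            exact ih u' b (by omega) h.1
          | head h' hcb ih' =>
            intro hau
            rename_i u' c
            have hEc : TransGen E c b := TransGen.mono (fun _ _ hh => hh.1) _ _ hcb
            have h1 : f a ≤ f u' := hfmono hau
            have h2 : g b < g c := hgstrict hEc
            have huc : TransGen H u' c := ih u' c (by omega) h'.1
            exact huc.trans (ih' (hau.tail h'.1))
        exact lift a hP ReflTransGen.refl
      · exact TransGen.single ⟨hab, hP⟩
  have key2 : ∀ a b, E a b → TransGen H a b := fun a b hab =>
    key (2 * Nat.card V) a b (by omega) hab
  constructor
  · intro h
    induction h with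
    | single h => exact key2 _ _ h
    | tail _ h2 ih => exact ih.trans (key2 _ _ h2)
  · intro h
    exact TransGen.mono (fun a b hab => hab.1) _ _ h
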